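/- Let g be a finite-dimensional Lie algebra over ℂ whose Killing form is nondegenerate (equivalently, g is semisimple). Then every symmetric biderivation of g is the zero map: if δ : g × g → g is bilinear, satisfies δ(⁅x,y⁆, z) = ⁅x, δ(y,z)⁆ + ⁅δ(x,z), y⁆ and δ(x, ⁅y,z⁆) = ⁅y, δ(x,z)⁆ + ⁅δ(x,y), z⁆ for all x, y, z, and δ(x,y) = δ(y,x) for all x, y, then δ = 0. -/

import Mathlib

/-- Every symmetric biderivation of a finite-dimensional complex Lie
algebra with nondegenerate Killing form is the zero map. -/
theorem stmt_4 {g : Type*} [LieRing g] [LieAlgebra ℂ g] [Module.Finite ℂ g]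
    (hKilling : (killingForm ℂ g).Nondegenerate)
    (δ : g →ₗ[ℂ] g →ₗ[ℂ] g)
    (hbd1 : ∀ x y z : g, δ ⁅x, y⁆ z = ⁅x, δ y z⁆ + ⁅δ x z, y⁆)
    (hbd2 : ∀ x y z : g, δ x ⁅y, z⁆ = ⁅y, δ x z⁆ + ⁅δ x y, z⁆)
    (hsymm : ∀ x y : g, δ x y = δ y x) :
    δ = 0 := by
  classical
  have hcomm : ∀ a b : g, killingForm ℂ g a b = killingForm ℂ g b a := fun a b =>
    LieModule.traceForm_comm ℂ g g a b
  -- For each fixed `z`, `x ↦ δ x z` is a derivation, hence skew w.r.t. the Killing form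
  have key : ∀ x y z : g, killingForm ℂ g (δ x z) y = - killingForm ℂ g x (δ y z) := by
    intro x y z
    have had : ∀ a : g, LieAlgebra.ad ℂ g (δ a z)
        = (δ.flip z) ∘ₗ LieAlgebra.ad ℂ g a - LieAlgebra.ad ℂ g a ∘ₗ (δ.flip z) := by
      intro a
      ext w
      simp only [LieAlgebra.ad_apply, LinearMap.sub_apply, LinearMap.comp_apply,
        LinearMap.flip_apply]
      rw [hbd1 a w z]
      abel
    have hsum : killingForm ℂ g (δ x z) y + killingForm ℂ g x (δ y z) = 0 := by
      rw [killingForm_apply_apply, killingForm_apply_apply, had x, had y]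
      rw [LinearMap.sub_comp, LinearMap.comp_sub, map_sub, map_sub]
      simp only [LinearMap.comp_assoc]
      have hcyc : LinearMap.trace ℂ g (δ.flip z ∘ₗ (LieAlgebra.ad ℂ g x ∘ₗ LieAlgebra.ad ℂ g y))
          = LinearMap.trace ℂ g ((LieAlgebra.ad ℂ g x ∘ₗ LieAlgebra.ad ℂ g y) ∘ₗ δ.flip z) :=
        LinearMap.trace_comp_comm' _ _
      simp only [LinearMap.comp_assoc] at hcyc
      linear_combination hcyc
    linear_combination hsum
  apply LinearMap.ext; intro x; apply LinearMap.ext; intro z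
  show δ x z = 0
  apply hKilling.1
  intro y
  have h1 : killingForm ℂ g (δ x z) y = - killingForm ℂ g (δ x z) y := by
    calc killingForm ℂ g (δ x z) y
        = killingForm ℂ g (δ z x) y := by rw [hsymm x z]
      _ = - killingForm ℂ g z (δ y x) := key z y x
      _ = - killingForm ℂ g (δ y x) z := by rw [hcomm z (δ y x)]
      _ = - killingForm ℂ g (δ x y) z := by rw [hsymm y x]
      _ = killingForm ℂ g x (δ z y) := by rw [key x z y]; ring
      _ = killingForm ℂ g x (δ y z) := by rw [hsymm z y]
      _ = killingForm ℂ g (δ y z) x := hcomm x (δ y z)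
      _ = - killingForm ℂ g y (δ x z) := key y x z
      _ = - killingForm ℂ g (δ x z) y := by rw [hcomm y (δ x z)]
  linear_combination h1 / 2
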